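/- The reproducing kernel of 𝐀^{(λⱼ)}(𝔻) satisfies 𝐁^{(λⱼ)}(z,ω)_{p,ℓ} = binom(ℓ,j)·binom(p,j)·(2λⱼ)_{ℓ−j}^{-1}·(2λⱼ)_{p−j}^{-1}·∂^{p−j}∂̄^{ℓ−j}(1−zω̄)^{−2λⱼ} for ℓ,p ≥ j and 0 otherwise; in particular 𝐁^{(λⱼ)}(0,0) is diagonal with (ℓ,ℓ) entry equal to binom(ℓ,j)²·(ℓ−j)!/(2λⱼ)_{ℓ−j} for ℓ ≥ j and 0 for ℓ < j. -/

import Mathlib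

open Metric

/-- The components of the orthonormal basis vectors `eⁿⱼ` of `𝐀^{(λⱼ)}(𝔻)`. -/
noncomputable def eComp (m : ℕ) (lam : ℝ) (j : Fin (m + 1)) (n : ℕ)
    (ℓ : Fin (m + 1)) (z : ℂ) : ℂ :=
  if (j : ℕ) ≤ (ℓ : ℕ) ∧ (ℓ : ℕ) ≤ n + (j : ℕ) then
    ((ℓ : ℕ).choose (j : ℕ) : ℂ)
      * ((Real.sqrt n.factorial / ((n + (j : ℕ) - (ℓ : ℕ)).factorial) : ℝ) : ℂ)
      * ((Real.sqrt ((ascPochhammer ℝ n).eval (2 * lam - m + 2 * (j : ℕ)))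
          / (ascPochhammer ℝ ((ℓ : ℕ) - (j : ℕ))).eval (2 * lam - m + 2 * (j : ℕ)) : ℝ) : ℂ)
      * z ^ (n + (j : ℕ) - (ℓ : ℕ))
  else 0

section KernelHelpers

open Complex Polynomial Filter

namespace KBA

lemma slit {c w : ℂ} (h : ‖c * w‖ < 1) : 1 - c * w ∈ Complex.slitPlane := by
  have := Complex.mem_slitPlane_of_norm_lt_one (z := -(c*w)) (by simpa using h)
  simpa [sub_eq_add_neg] using this

lemma sub_ne (c w : ℂ) (h : ‖c * w‖ < 1) : 1 - c * w ≠ 0 :=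
  Complex.slitPlane_ne_zero (slit h)

lemma hasDerivAt_cpow (ν c : ℂ) {w : ℂ} (h : ‖c * w‖ < 1) :
    HasDerivAt (fun u : ℂ => (1 - c * u) ^ (-ν))
      ((-ν) * (1 - c * w) ^ (-ν - 1) * (-c)) w := by
  have h1 : HasDerivAt (fun u : ℂ => 1 - c * u) (-c) w := by
    simpa using ((hasDerivAt_id w).const_mul c).const_sub 1
  exact h1.cpow_const (slit h)

lemma diffAt_cpow (ν c : ℂ) {w : ℂ} (h : ‖c * w‖ < 1) :
    DifferentiableAt ℂ (fun u : ℂ => (1 - c * u) ^ (-ν)) w :=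
  (hasDerivAt_cpow ν c h).differentiableAt

lemma isOpen_good (c : ℂ) : IsOpen {w : ℂ | ‖c * w‖ < 1} :=
  isOpen_lt (continuous_norm.comp (continuous_const.mul continuous_id)) continuous_const

end KBA
namespace KBA

lemma iteratedDeriv_cpow (ν c : ℂ) : ∀ (a : ℕ) {z : ℂ}, ‖c * z‖ < 1 →
    iteratedDeriv a (fun w : ℂ => (1 - c * w) ^ (-ν)) z
      = (ascPochhammer ℂ a).eval ν * c ^ a * (1 - c * z) ^ (-(ν + a)) := by
  intro a
  induction a with
  | zero => intro z hz; simp [iteratedDeriv_zero]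
  | succ a IH =>
    intro z hz
    rw [iteratedDeriv_succ]
    have hev : iteratedDeriv a (fun w : ℂ => (1 - c * w) ^ (-ν))
        =ᶠ[nhds z] fun w => (ascPochhammer ℂ a).eval ν * c ^ a * (1 - c * w) ^ (-(ν + a)) := by
      filter_upwards [(isOpen_good c).mem_nhds hz] with w hw
      exact IH hw
    rw [hev.deriv_eq]
    have h1 : HasDerivAt (fun w : ℂ => (ascPochhammer ℂ a).eval ν * c ^ a * (1 - c * w) ^ (-(ν + a)))
        ((ascPochhammer ℂ a).eval ν * c ^ a * ((-(ν + a)) * (1 - c * z) ^ (-(ν + a) - 1) * (-c))) z :=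
      (hasDerivAt_cpow (ν + a) c hz).const_mul _
    rw [h1.deriv]
    have he : (-(ν + (a:ℕ)) - 1 : ℂ) = -(ν + ((a+1 : ℕ) : ℂ)) := by push_cast; ring
    rw [he]
    rw [ascPochhammer_succ_right]
    simp only [eval_mul, eval_add, eval_X, eval_natCast]
    ring

end KBA
namespace KBA

lemma analyticOnNhd_cpow (ν c : ℂ) :
    AnalyticOnNhd ℂ (fun u : ℂ => (1 - c * u) ^ (-ν)) {w : ℂ | ‖c * w‖ < 1} := by
  apply DifferentiableOn.analyticOnNhd _ (isOpen_good c)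
  exact fun w hw => (diffAt_cpow ν c hw).differentiableWithinAt

lemma hasSum_binomial (ν : ℂ) {x : ℂ} (hx : ‖x‖ < 1) :
    HasSum (fun n : ℕ => ((n.factorial : ℂ))⁻¹ * (ascPochhammer ℂ n).eval ν * x ^ n)
      ((1 - x) ^ (-ν)) := by
  have hd : DifferentiableOn ℂ (fun w : ℂ => (1 - (1:ℂ) * w) ^ (-ν)) (ball (0:ℂ) 1) := by
    intro w hw
    exact (diffAt_cpow ν 1 (by simpa using mem_ball_zero_iff.mp hw)).differentiableWithinAt
  have hx' : x ∈ ball (0:ℂ) 1 := mem_ball_zero_iff.mpr hx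
  have H := Complex.hasSum_taylorSeries_on_ball hd hx'
  have hcoef : ∀ n : ℕ, iteratedDeriv n (fun w : ℂ => (1 - w) ^ (-ν)) 0
      = (ascPochhammer ℂ n).eval ν := by
    intro n
    have := iteratedDeriv_cpow ν 1 n (z := 0) (by simp)
    simpa [Complex.one_cpow] using this
  simp only [sub_zero, smul_eq_mul, one_mul, hcoef] at H
  convert H using 2 with n
  · rfl
  ring

lemma analyticAt_of_analyticAt_deriv {f : ℂ → ℂ} {x : ℂ} (h : AnalyticAt ℂ f x) :
    AnalyticAt ℂ (deriv f) x := by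
  obtain ⟨s, hs, h2⟩ := h.eventually_analyticAt.exists_mem
  obtain ⟨t, hts, ht, hxt⟩ := _root_.mem_nhds_iff.mp hs
  have ha : AnalyticOnNhd ℂ f t := fun y hy => h2 y (hts hy)
  exact ha.deriv x hxt

lemma iteratedDeriv_comp_iteratedDeriv (b : ℕ) :
    ∀ (n : ℕ) (f : ℂ → ℂ), iteratedDeriv n (iteratedDeriv b f) = iteratedDeriv (n + b) f := by
  induction b with
  | zero => intro n f; simp [iteratedDeriv_zero]
  | succ b IH =>
    intro n f
    rw [show n + (b+1) = (n+b)+1 from rfl]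
    rw [iteratedDeriv_succ' (n := b), IH n (deriv f), ← iteratedDeriv_succ']

end KBA
namespace KBA

lemma iteratedDeriv_add_zero : ∀ (n : ℕ) (f g : ℂ → ℂ), AnalyticAt ℂ f 0 → AnalyticAt ℂ g 0 →
    iteratedDeriv n (fun u => f u + g u) 0 = iteratedDeriv n f 0 + iteratedDeriv n g 0 := by
  intro n
  induction n with
  | zero => intro f g _ _; simp
  | succ n IH =>
    intro f g hf hg
    have hev : deriv (fun u => f u + g u) =ᶠ[nhds (0:ℂ)] fun u => deriv f u + deriv g u := by
      filter_upwards [hf.eventually_analyticAt, hg.eventually_analyticAt] with y h1 h2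
      exact deriv_add h1.differentiableAt h2.differentiableAt
    rw [iteratedDeriv_succ', hev.iteratedDeriv_eq n,
      IH _ _ (analyticAt_of_analyticAt_deriv hf) (analyticAt_of_analyticAt_deriv hg),
      ← iteratedDeriv_succ', ← iteratedDeriv_succ']

lemma iteratedDeriv_const_mul_zero (C : ℂ) : ∀ (n : ℕ) (f : ℂ → ℂ), AnalyticAt ℂ f 0 →
    iteratedDeriv n (fun u => C * f u) 0 = C * iteratedDeriv n f 0 := by
  intro n
  induction n with
  | zero => intro f _; simp
  | succ n IH =>
    intro f hf
    have hev : deriv (fun u => C * f u) =ᶠ[nhds (0:ℂ)] fun u => C * deriv f u := by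
      filter_upwards [hf.eventually_analyticAt] with y h1
      exact deriv_const_mul C h1.differentiableAt
    rw [iteratedDeriv_succ', hev.iteratedDeriv_eq n,
      IH _ (analyticAt_of_analyticAt_deriv hf), ← iteratedDeriv_succ']

lemma iteratedDeriv_id_mul_zero : ∀ (n : ℕ) (g : ℂ → ℂ), AnalyticAt ℂ g 0 →
    iteratedDeriv (n + 1) (fun u => u * g u) 0 = (n + 1 : ℂ) * iteratedDeriv n g 0 := by
  intro n
  induction n with
  | zero =>
    intro g hg
    have hev : deriv (fun u : ℂ => u * g u) =ᶠ[nhds (0:ℂ)] fun u => g u + u * deriv g u := by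
      filter_upwards [hg.eventually_analyticAt] with y h1
      have := ((hasDerivAt_id' y).mul h1.differentiableAt.hasDerivAt).deriv
      exact this.trans (by ring)
    rw [iteratedDeriv_succ', hev.iteratedDeriv_eq 0]
    simp
  | succ n IH =>
    intro g hg
    have hderiv : AnalyticAt ℂ (deriv g) 0 := analyticAt_of_analyticAt_deriv hg
    have hev : deriv (fun u : ℂ => u * g u) =ᶠ[nhds (0:ℂ)]
        fun u => g u + u * deriv g u := by
      filter_upwards [hg.eventually_analyticAt] with y h1
      have := ((hasDerivAt_id' y).mul h1.differentiableAt.hasDerivAt).deriv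
      exact this.trans (by ring)
    rw [iteratedDeriv_succ', hev.iteratedDeriv_eq (n+1),
      iteratedDeriv_add_zero (n+1) g (fun u => u * deriv g u) hg
        ((analyticAt_id).mul hderiv),
      IH (deriv g) hderiv, ← iteratedDeriv_succ']
    push_cast
    ring

lemma iteratedDeriv_monomial_mul_zero : ∀ (a : ℕ) (g : ℂ → ℂ), AnalyticAt ℂ g 0 → ∀ (N : ℕ),
    iteratedDeriv N (fun u => u ^ a * g u) 0
      = (N.descFactorial a : ℂ) * iteratedDeriv (N - a) g 0 := by
  intro a
  induction a with
  | zero => intro g hg N; simp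
  | succ a IH =>
    intro g hg N
    have hfg : (fun u : ℂ => u ^ (a+1) * g u) = fun u => u * (u ^ a * g u) := by
      funext u; ring
    rw [hfg]
    match N with
    | 0 => simp
    | (M+1) =>
      have hga : AnalyticAt ℂ (fun u : ℂ => u ^ a * g u) 0 := by
        exact ((analyticAt_id.pow a).mul hg : AnalyticAt ℂ (fun u : ℂ => (id u : ℂ) ^ a * g u) 0)
      rw [iteratedDeriv_id_mul_zero M (fun u : ℂ => u ^ a * g u) hga,
        IH g hg M, Nat.succ_descFactorial_succ, Nat.succ_sub_succ]
      push_cast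
      ring

end KBA
namespace KBA

lemma norm_mul_lt_one {c u : ℂ} (hc : ‖c‖ < 1) (hu : ‖u‖ < 1) : ‖c * u‖ < 1 := by
  rw [norm_mul]
  calc ‖c‖ * ‖u‖ ≤ 1 * ‖u‖ := by
        exact mul_le_mul_of_nonneg_right hc.le (norm_nonneg u)
    _ = ‖u‖ := one_mul _
    _ < 1 := hu

lemma coeffF (μ : ℂ) (a : ℕ) {c : ℂ} (hc : ‖c‖ < 1) (N : ℕ) :
    iteratedDeriv N (fun u => (ascPochhammer ℂ a).eval μ *
        (u ^ a * (1 - c * u) ^ (-(μ + a)))) 0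
      = (ascPochhammer ℂ a).eval μ * ((N.descFactorial a : ℂ) *
          ((ascPochhammer ℂ (N - a)).eval (μ + a) * c ^ (N - a))) := by
  have hh0 : AnalyticAt ℂ (fun u : ℂ => (1 - c * u) ^ (-(μ + (a:ℕ)))) 0 :=
    analyticOnNhd_cpow (μ + a) c 0 (by simp)
  have hga : AnalyticAt ℂ (fun u : ℂ => u ^ a * (1 - c * u) ^ (-(μ + (a:ℕ)))) 0 := by
    exact ((analyticAt_id.pow a).mul hh0 :
      AnalyticAt ℂ (fun u : ℂ => (id u : ℂ) ^ a * (1 - c * u) ^ (-(μ + (a:ℕ)))) 0)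
  rw [iteratedDeriv_const_mul_zero _ N _ hga,
    iteratedDeriv_monomial_mul_zero a _ hh0 N,
    iteratedDeriv_cpow (μ + a) c (N - a) (z := 0) (by simp)]
  simp [Complex.one_cpow]

lemma main_series (μ : ℂ) (a b : ℕ) {c z : ℂ} (hc : ‖c‖ < 1) (hz : ‖z‖ < 1) :
    HasSum (fun n : ℕ => ((n.factorial : ℂ))⁻¹ * z ^ n *
        ((ascPochhammer ℂ a).eval μ * (((n+b).descFactorial a : ℂ) *
          ((ascPochhammer ℂ (n + b - a)).eval (μ + a) * c ^ (n + b - a)))))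
      (iteratedDeriv b (fun u => (ascPochhammer ℂ a).eval μ *
          (u ^ a * (1 - c * u) ^ (-(μ + a)))) z) := by
  set F : ℂ → ℂ := fun u => (ascPochhammer ℂ a).eval μ *
      (u ^ a * (1 - c * u) ^ (-(μ + (a:ℕ)))) with hF
  have hFd : DifferentiableOn ℂ F (ball (0:ℂ) 1) := by
    intro u hu
    have : DifferentiableAt ℂ F u := by
      apply DifferentiableAt.const_mul
      exact ((differentiableAt_id.pow a).mul
        (diffAt_cpow (μ + a) c (norm_mul_lt_one hc (mem_ball_zero_iff.mp hu))))
    exact this.differentiableWithinAt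
  have hFan : AnalyticOnNhd ℂ F (ball (0:ℂ) 1) := hFd.analyticOnNhd isOpen_ball
  have hGan : AnalyticOnNhd ℂ (iteratedDeriv b F) (ball (0:ℂ) 1) := by
    rw [iteratedDeriv_eq_iterate]
    exact hFan.iterated_deriv b
  have H := Complex.hasSum_taylorSeries_on_ball hGan.differentiableOn
    (mem_ball_zero_iff.mpr hz)
  have hcoef : ∀ n : ℕ, iteratedDeriv n (iteratedDeriv b F) 0 = iteratedDeriv (n + b) F 0 := by
    intro n; rw [iteratedDeriv_comp_iteratedDeriv b n F]
  convert H using 2 with n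
  · rfl
  rw [hcoef n, coeffF μ a hc (n + b)]
  simp only [sub_zero, smul_eq_mul]
  ring

end KBA
namespace KBA

lemma poch_cast (k : ℕ) (x : ℝ) :
    (((ascPochhammer ℝ k).eval x : ℝ) : ℂ) = (ascPochhammer ℂ k).eval (x : ℂ) := by
  induction k with
  | zero => simp
  | succ k IH =>
    rw [ascPochhammer_succ_right, ascPochhammer_succ_right]
    simp only [eval_mul, eval_add, eval_X, eval_natCast]
    push_cast
    rw [IH]

lemma poch_mul_eval (a k : ℕ) (μ : ℂ) :
    (ascPochhammer ℂ a).eval μ * (ascPochhammer ℂ k).eval (μ + a)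
      = (ascPochhammer ℂ (a + k)).eval μ := by
  have := ascPochhammer_mul (S := ℂ) a k
  have h2 := congrArg (Polynomial.eval μ) this
  simpa [eval_mul, eval_comp, eval_add, eval_X, eval_natCast] using h2

end KBA
namespace KBA

lemma part2 (m : ℕ) (lam : ℝ) (hlam : (m : ℝ) < 2 * lam) (j : Fin (m + 1))
    (p ℓ : Fin (m + 1)) :
    (∑' n : ℕ, eComp m lam j n p 0 * (starRingEnd ℂ) (eComp m lam j n ℓ 0))
      = if p = ℓ then
          (if (j : ℕ) ≤ (ℓ : ℕ) then
            (((ℓ : ℕ).choose (j : ℕ) : ℂ)) ^ 2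
              * ((((ℓ : ℕ) - (j : ℕ)).factorial : ℂ))
              * (((ascPochhammer ℝ ((ℓ : ℕ) - (j : ℕ))).eval
                    (2 * lam - m + 2 * (j : ℕ)) : ℝ) : ℂ)⁻¹
          else 0)
        else 0 := by
  set μR : ℝ := 2 * lam - m + 2 * (j : ℕ) with hμR
  have hμpos : 0 < μR := by
    have : (0:ℝ) ≤ 2 * ((j:ℕ):ℝ) := by positivity
    rw [hμR]; linarith
  by_cases hpl : p = ℓ
  · subst hpl
    rw [if_pos rfl]
    by_cases hjl : (j : ℕ) ≤ (p : ℕ)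
    · rw [if_pos hjl]
      set a : ℕ := (p : ℕ) - (j : ℕ) with ha
      have hPa : 0 < (ascPochhammer ℝ a).eval μR := ascPochhammer_pos a μR hμpos
      rw [tsum_eq_single a ?_]
      · have hcond : (j : ℕ) ≤ (p : ℕ) ∧ (p : ℕ) ≤ a + (j : ℕ) := ⟨hjl, by omega⟩
        rw [eComp, if_pos hcond]
        have e0 : a + (j : ℕ) - (p : ℕ) = 0 := by omega
        rw [e0]
        simp only [pow_zero, Nat.factorial_zero, Nat.cast_one, div_one, map_mul,
          Complex.conj_ofReal, map_natCast, mul_one]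
        rw [← hμR, ← ha]
        have h1 : Real.sqrt a.factorial * Real.sqrt a.factorial = (a.factorial : ℝ) :=
          Real.mul_self_sqrt (by positivity)
        have h2 : Real.sqrt ((ascPochhammer ℝ a).eval μR)
            * Real.sqrt ((ascPochhammer ℝ a).eval μR) = (ascPochhammer ℝ a).eval μR :=
          Real.mul_self_sqrt hPa.le
        have hre : (Real.sqrt a.factorial * (Real.sqrt ((ascPochhammer ℝ a).eval μR)
              / (ascPochhammer ℝ a).eval μR))
            * (Real.sqrt a.factorial * (Real.sqrt ((ascPochhammer ℝ a).eval μR)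
              / (ascPochhammer ℝ a).eval μR))
            = (a.factorial : ℝ) / (ascPochhammer ℝ a).eval μR := by
          have hrw : (Real.sqrt a.factorial * (Real.sqrt ((ascPochhammer ℝ a).eval μR)
              / (ascPochhammer ℝ a).eval μR))
            * (Real.sqrt a.factorial * (Real.sqrt ((ascPochhammer ℝ a).eval μR)
              / (ascPochhammer ℝ a).eval μR))
            = (Real.sqrt a.factorial * Real.sqrt a.factorial)
              * ((Real.sqrt ((ascPochhammer ℝ a).eval μR)
                * Real.sqrt ((ascPochhammer ℝ a).eval μR))
                / ((ascPochhammer ℝ a).eval μR * (ascPochhammer ℝ a).eval μR)) := by ring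
          rw [hrw, h1, h2]
          field_simp
        calc ((p:ℕ).choose (j:ℕ) : ℂ) * ((Real.sqrt a.factorial : ℝ) : ℂ)
              * ((Real.sqrt ((ascPochhammer ℝ a).eval μR) / (ascPochhammer ℝ a).eval μR : ℝ) : ℂ)
              * (((p:ℕ).choose (j:ℕ) : ℂ) * ((Real.sqrt a.factorial : ℝ) : ℂ)
              * ((Real.sqrt ((ascPochhammer ℝ a).eval μR) / (ascPochhammer ℝ a).eval μR : ℝ) : ℂ))
            = ((p:ℕ).choose (j:ℕ) : ℂ)^2 * ((((Real.sqrt a.factorial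
                * (Real.sqrt ((ascPochhammer ℝ a).eval μR) / (ascPochhammer ℝ a).eval μR))
                * (Real.sqrt a.factorial * (Real.sqrt ((ascPochhammer ℝ a).eval μR)
                / (ascPochhammer ℝ a).eval μR)) : ℝ)) : ℂ) := by
              push_cast; ring
          _ = ((p:ℕ).choose (j:ℕ) : ℂ)
                * (((a.factorial : ℝ) / (ascPochhammer ℝ a).eval μR : ℝ) : ℂ)
                * ((p:ℕ).choose (j:ℕ) : ℂ) := by rw [hre]; ring
          _ = ((p:ℕ).choose (j:ℕ) : ℂ)^2 * (a.factorial : ℂ)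
                * (((ascPochhammer ℝ a).eval μR : ℝ) : ℂ)⁻¹ := by
              push_cast; ring
      · intro n hn
        rw [eComp]
        by_cases hcond : (j : ℕ) ≤ (p : ℕ) ∧ (p : ℕ) ≤ n + (j : ℕ)
        · rw [if_pos hcond]
          have hne : n + (j:ℕ) - (p:ℕ) ≠ 0 := by omega
          rw [zero_pow hne]
          ring
        · rw [if_neg hcond]; ring
    · rw [if_neg hjl]
      have hzero : ∀ n : ℕ, eComp m lam j n p 0 * (starRingEnd ℂ) (eComp m lam j n p 0) = 0 := by
        intro n
        rw [eComp, if_neg (by tauto)]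
        ring
      simp only [hzero]
      exact tsum_zero
  · rw [if_neg hpl]
    have hzero : ∀ n : ℕ, eComp m lam j n p 0 * (starRingEnd ℂ) (eComp m lam j n ℓ 0) = 0 := by
      intro n
      rw [eComp, eComp]
      by_cases h1 : (j : ℕ) ≤ (p : ℕ) ∧ (p : ℕ) ≤ n + (j : ℕ)
      · by_cases h2 : (j : ℕ) ≤ (ℓ : ℕ) ∧ (ℓ : ℕ) ≤ n + (j : ℕ)
        · rw [if_pos h1, if_pos h2]
          have hne : (p : ℕ) ≠ (ℓ : ℕ) := fun h => hpl (Fin.ext h)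
          by_cases hp0 : n + (j:ℕ) - (p:ℕ) = 0
          · have hl0 : n + (j:ℕ) - (ℓ:ℕ) ≠ 0 := by omega
            rw [zero_pow hl0]
            simp
          · rw [zero_pow hp0]
            ring
        · rw [if_neg h2]; simp
      · rw [if_neg h1]; ring
    simp only [hzero]
    exact tsum_zero

end KBA
namespace KBA

lemma part1 (m : ℕ) (lam : ℝ) (hlam : (m : ℝ) < 2 * lam) (j : Fin (m + 1)) :
    ∀ z ∈ ball (0:ℂ) 1, ∀ ω ∈ ball (0:ℂ) 1, ∀ p ℓ : Fin (m + 1),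
      (∑' n : ℕ, eComp m lam j n p z * (starRingEnd ℂ) (eComp m lam j n ℓ ω))
        = if (j : ℕ) ≤ (ℓ : ℕ) ∧ (j : ℕ) ≤ (p : ℕ) then
            ((ℓ : ℕ).choose (j : ℕ) : ℂ) * ((p : ℕ).choose (j : ℕ) : ℂ)
              * (((ascPochhammer ℝ ((ℓ : ℕ) - (j : ℕ))).eval
                    (2 * lam - m + 2 * (j : ℕ)) : ℝ) : ℂ)⁻¹
              * (((ascPochhammer ℝ ((p : ℕ) - (j : ℕ))).eval
                    (2 * lam - m + 2 * (j : ℕ)) : ℝ) : ℂ)⁻¹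
              * iteratedDeriv ((p : ℕ) - (j : ℕ))
                  (fun u => iteratedDeriv ((ℓ : ℕ) - (j : ℕ))
                    (fun w => (1 - u * w) ^ (-(2 * (lam : ℂ) - m + 2 * (j : ℕ))))
                    ((starRingEnd ℂ) ω)) z
          else 0 := by
  intro z hzball ω hωball p ℓ
  have hz : ‖z‖ < 1 := mem_ball_zero_iff.mp hzball
  have hω : ‖ω‖ < 1 := mem_ball_zero_iff.mp hωball
  set c : ℂ := (starRingEnd ℂ) ω with hcdef
  have hc : ‖c‖ < 1 := by rw [hcdef, RCLike.norm_conj]; exact hω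
  by_cases hcond : (j : ℕ) ≤ (ℓ : ℕ) ∧ (j : ℕ) ≤ (p : ℕ)
  swap
  · rw [if_neg hcond]
    have hzero : ∀ n : ℕ, eComp m lam j n p z * (starRingEnd ℂ) (eComp m lam j n ℓ ω) = 0 := by
      intro n
      rcases not_and_or.mp hcond with h | h
      · simp only [eComp]
        rw [if_neg (fun hh : (j:ℕ) ≤ (ℓ:ℕ) ∧ (ℓ:ℕ) ≤ n + (j:ℕ) => h hh.1)]
        simp
      · simp only [eComp]
        rw [if_neg (fun hh : (j:ℕ) ≤ (p:ℕ) ∧ (p:ℕ) ≤ n + (j:ℕ) => h hh.1)]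
        simp
    simp only [hzero]
    exact tsum_zero
  obtain ⟨hjl, hjp⟩ := hcond
  rw [if_pos ⟨hjl, hjp⟩]
  set μR : ℝ := 2 * lam - m + 2 * (j : ℕ) with hμR
  have hμpos : 0 < μR := by
    have : (0:ℝ) ≤ 2 * ((j:ℕ):ℝ) := by positivity
    rw [hμR]; linarith
  set a : ℕ := (ℓ : ℕ) - (j : ℕ) with hadef
  set b : ℕ := (p : ℕ) - (j : ℕ) with hbdef
  have hexp : (2 * (lam : ℂ) - m + 2 * (j : ℕ)) = ((μR : ℝ) : ℂ) := by
    rw [hμR]; push_cast; ring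
  simp only [hexp]
  set μ : ℂ := ((μR : ℝ) : ℂ) with hμdef
  set F : ℂ → ℂ := fun u => (ascPochhammer ℂ a).eval μ *
      (u ^ a * (1 - c * u) ^ (-(μ + (a:ℕ)))) with hFdef
  have hFev : (fun u => iteratedDeriv a (fun w : ℂ => (1 - u * w) ^ (-μ)) c)
      =ᶠ[nhds z] F := by
    filter_upwards [isOpen_ball.mem_nhds hzball] with u hu
    have hu1 : ‖u‖ < 1 := mem_ball_zero_iff.mp hu
    have := iteratedDeriv_cpow μ u a (z := c) (norm_mul_lt_one hu1 hc)
    rw [hFdef]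
    rw [this]
    rw [mul_comm u c]
    ring
  rw [hFev.iteratedDeriv_eq b]
  have HS := main_series μ a b hc hz
  set PaR : ℝ := (ascPochhammer ℝ a).eval μR with hPaR
  set PbR : ℝ := (ascPochhammer ℝ b).eval μR with hPbR
  have hPa : 0 < PaR := ascPochhammer_pos a μR hμpos
  have hPb : 0 < PbR := ascPochhammer_pos b μR hμpos
  set K : ℂ := ((ℓ : ℕ).choose (j : ℕ) : ℂ) * ((p : ℕ).choose (j : ℕ) : ℂ)
      * ((PaR : ℝ) : ℂ)⁻¹ * ((PbR : ℝ) : ℂ)⁻¹ with hKdef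
  have HS2 := HS.mul_left K
  -- pointwise identification
  have key : ∀ n : ℕ, eComp m lam j (n + b) p z * (starRingEnd ℂ) (eComp m lam j (n + b) ℓ ω)
      = K * (((n.factorial : ℂ))⁻¹ * z ^ n *
        ((ascPochhammer ℂ a).eval μ * (((n+b).descFactorial a : ℂ) *
          ((ascPochhammer ℂ (n + b - a)).eval (μ + a) * c ^ (n + b - a))))) := by
    intro n
    by_cases hab : a ≤ n + b
    · have hcondp : (j : ℕ) ≤ (p : ℕ) ∧ (p : ℕ) ≤ (n + b) + (j : ℕ) := ⟨hjp, by omega⟩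
      have hcondl : (j : ℕ) ≤ (ℓ : ℕ) ∧ (ℓ : ℕ) ≤ (n + b) + (j : ℕ) := ⟨hjl, by omega⟩
      rw [eComp, if_pos hcondp, eComp, if_pos hcondl]
      have e1 : (n + b) + (j : ℕ) - (p : ℕ) = n := by omega
      have e2 : (n + b) + (j : ℕ) - (ℓ : ℕ) = n + b - a := by omega
      rw [e1, e2, ← hμR, ← hadef, ← hbdef]
      simp only [map_mul, Complex.conj_ofReal, map_natCast, map_pow, ← hcdef]
      -- now a pure algebraic identity
      have h1 : Real.sqrt ((n + b).factorial) * Real.sqrt ((n + b).factorial)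
          = (((n+b).factorial : ℝ)) := Real.mul_self_sqrt (by positivity)
      have hPN : 0 < (ascPochhammer ℝ (n+b)).eval μR := ascPochhammer_pos _ μR hμpos
      have h2 : Real.sqrt ((ascPochhammer ℝ (n+b)).eval μR)
          * Real.sqrt ((ascPochhammer ℝ (n+b)).eval μR)
          = (ascPochhammer ℝ (n+b)).eval μR := Real.mul_self_sqrt hPN.le
      have h3 : ((ascPochhammer ℂ a).eval μ * (ascPochhammer ℂ (n + b - a)).eval (μ + a))
          = (((ascPochhammer ℝ (n+b)).eval μR : ℝ) : ℂ) := by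
        have e3 : a + (n + b - a) = n + b := by omega
        rw [poch_mul_eval a (n + b - a) μ, e3, hμdef, ← poch_cast]
      have h4 : ((n+b).descFactorial a : ℂ) * ((n + b - a).factorial : ℂ)
          = ((n+b).factorial : ℂ) := by
        have := Nat.factorial_mul_descFactorial (n := n + b) (k := a) hab
        push_cast [← this]
        ring
      have h1c : ((Real.sqrt ((n+b).factorial) : ℝ) : ℂ)
          * ((Real.sqrt ((n+b).factorial) : ℝ) : ℂ) = (((n+b).factorial : ℕ) : ℂ) := by
        rw [← Complex.ofReal_mul, h1, Complex.ofReal_natCast]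
      have h2c : ((Real.sqrt ((ascPochhammer ℝ (n+b)).eval μR) : ℝ) : ℂ)
          * ((Real.sqrt ((ascPochhammer ℝ (n+b)).eval μR) : ℝ) : ℂ)
          = (((ascPochhammer ℝ (n+b)).eval μR : ℝ) : ℂ) := by
        rw [← Complex.ofReal_mul, h2]
      have hne1 : ((n.factorial : ℕ) : ℂ) ≠ 0 := by
        exact_mod_cast Nat.cast_ne_zero.mpr n.factorial_ne_zero
      have hne2 : (((n + b - a).factorial : ℕ) : ℂ) ≠ 0 := by
        exact_mod_cast Nat.cast_ne_zero.mpr (n + b - a).factorial_ne_zero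
      have hne3 : ((PaR : ℝ) : ℂ) ≠ 0 := by
        simpa using Complex.ofReal_ne_zero.mpr hPa.ne'
      have hne4 : ((PbR : ℝ) : ℂ) ≠ 0 := by
        simpa using Complex.ofReal_ne_zero.mpr hPb.ne'
      rw [hKdef]
      simp only [Complex.ofReal_div, Complex.ofReal_natCast]
      simp only [← hPaR, ← hPbR]
      field_simp
      linear_combination
        (((ℓ:ℕ).choose (j:ℕ) : ℂ) * ((p:ℕ).choose (j:ℕ) : ℂ) * z^n * c^(n+b-a)
            ) *
          (((Real.sqrt ((ascPochhammer ℝ (n+b)).eval μR) : ℝ) : ℂ)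
            * ((Real.sqrt ((ascPochhammer ℝ (n+b)).eval μR) : ℝ) : ℂ) * h1c
          + (((n+b).factorial : ℕ) : ℂ) * h2c
          - (((n+b).descFactorial a : ℕ) : ℂ) * (((n+b-a).factorial : ℕ) : ℂ) * h3
          - (((ascPochhammer ℝ (n+b)).eval μR : ℝ) : ℂ) * h4)
    · have hcondl : ¬ ((j : ℕ) ≤ (ℓ : ℕ) ∧ (ℓ : ℕ) ≤ (n + b) + (j : ℕ)) := by
        rintro ⟨-, h⟩; omega
      simp only [eComp]
      rw [if_neg hcondl, Nat.descFactorial_of_lt (by omega)]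
      simp
  have hzero : ∀ i ∈ Finset.range b,
      eComp m lam j i p z * (starRingEnd ℂ) (eComp m lam j i ℓ ω) = 0 := by
    intro i hi
    have hib : i < b := Finset.mem_range.mp hi
    have hcondp : ¬ ((j : ℕ) ≤ (p : ℕ) ∧ (p : ℕ) ≤ i + (j : ℕ)) := by
      rintro ⟨-, h⟩; omega
    simp only [eComp]
    rw [if_neg hcondp]
    simp
  have HS3 : HasSum (fun n : ℕ =>
      eComp m lam j (n + b) p z * (starRingEnd ℂ) (eComp m lam j (n + b) ℓ ω))
      (K * iteratedDeriv b F z) := by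
    simp only [key]
    exact HS2
  have HS4 := (hasSum_nat_add_iff (f := fun n : ℕ =>
      eComp m lam j n p z * (starRingEnd ℂ) (eComp m lam j n ℓ ω)) b).mp HS3
  rw [Finset.sum_eq_zero hzero, add_zero] at HS4
  rw [HS4.tsum_eq, hKdef]
end KBA

end KernelHelpers

/-- The reproducing kernel `𝐁^{(λⱼ)}(z,ω) = Σₙ eⁿⱼ(z)·eⁿⱼ(ω)*` of
`𝐀^{(λⱼ)}(𝔻)` satisfies `𝐁^{(λⱼ)}(z,ω)_{p,ℓ} =
C(ℓ,j)·C(p,j)·(2λⱼ)_{ℓ-j}⁻¹·(2λⱼ)_{p-j}⁻¹·∂^{p-j}∂̄^{ℓ-j}(1-zω̄)^{-2λⱼ}` for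
`ℓ,p ≥ j` and `0` otherwise; in particular `𝐁^{(λⱼ)}(0,0)` is diagonal with
`(ℓ,ℓ)`-entry `C(ℓ,j)²·(ℓ-j)!/(2λⱼ)_{ℓ-j}` for `ℓ ≥ j` and `0` for `ℓ < j`. -/
theorem kernel_of_bold_A_lambda_j
    (m : ℕ) (hm : 0 < m) (lam : ℝ) (hlam : (m : ℝ) < 2 * lam) (j : Fin (m + 1)) :
    (∀ z ∈ ball (0:ℂ) 1, ∀ ω ∈ ball (0:ℂ) 1, ∀ p ℓ : Fin (m + 1),
      (∑' n : ℕ, eComp m lam j n p z * (starRingEnd ℂ) (eComp m lam j n ℓ ω))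
        = if (j : ℕ) ≤ (ℓ : ℕ) ∧ (j : ℕ) ≤ (p : ℕ) then
            ((ℓ : ℕ).choose (j : ℕ) : ℂ) * ((p : ℕ).choose (j : ℕ) : ℂ)
              * (((ascPochhammer ℝ ((ℓ : ℕ) - (j : ℕ))).eval
                    (2 * lam - m + 2 * (j : ℕ)) : ℝ) : ℂ)⁻¹
              * (((ascPochhammer ℝ ((p : ℕ) - (j : ℕ))).eval
                    (2 * lam - m + 2 * (j : ℕ)) : ℝ) : ℂ)⁻¹
              * iteratedDeriv ((p : ℕ) - (j : ℕ))
                  (fun u => iteratedDeriv ((ℓ : ℕ) - (j : ℕ))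
                    (fun w => (1 - u * w) ^ (-(2 * (lam : ℂ) - m + 2 * (j : ℕ))))
                    ((starRingEnd ℂ) ω)) z
          else 0)
    ∧ (∀ p ℓ : Fin (m + 1),
      (∑' n : ℕ, eComp m lam j n p 0 * (starRingEnd ℂ) (eComp m lam j n ℓ 0))
        = if p = ℓ then
            (if (j : ℕ) ≤ (ℓ : ℕ) then
              (((ℓ : ℕ).choose (j : ℕ) : ℂ)) ^ 2
                * ((((ℓ : ℕ) - (j : ℕ)).factorial : ℂ))
                * (((ascPochhammer ℝ ((ℓ : ℕ) - (j : ℕ))).eval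
                      (2 * lam - m + 2 * (j : ℕ)) : ℝ) : ℂ)⁻¹
            else 0)
          else 0) :=
  ⟨KBA.part1 m lam hlam j, KBA.part2 m lam hlam j⟩
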